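/- Let d, r ∈ ℕ with r ≥ 1, let γ > 0 be real, let α > 5/2 be real, and let v̂ : ℤ^d → ℂ satisfy ‖v̂‖_α < ∞. Then there exists a constant c₁ > 0, depending only on d, α, γ and v̂ (in particular independent of the moduli, the generating vectors, the anti-aliasing family and the vector y), such that for all moduli n_1,…,n_r ≥ 1, all generating vectors z_1,…,z_r ∈ ℤ^d, every minimal anti-aliasing family (h_ξ)_{ξ ∈ ℤ_{n_1}×⋯×ℤ_{n_r}}, and every y ∈ ℂ^{ℤ_{n_1}×⋯×ℤ_{n_r}}: ‖(DW − WD) y‖₂ ≤ c₁ · ‖(D + I) y‖₂, where D, W are the matrices defined in the context and I is the identity matrix. -/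

import Mathlib

noncomputable section

/-- Integer dot product on `ℤ^d`. -/
def dotZ {d : ℕ} (h z : Fin d → ℤ) : ℤ := ∑ i, h i * z i

/-- The squared Korobov weight `r_α(h)² = ∏_j max(|h_j|^(2α), 1)`. -/
def korWeightSq {d : ℕ} (α : ℝ) (h : Fin d → ℤ) : ℝ :=
  ∏ j, max (|(h j : ℝ)| ^ (2 * α)) 1

/-- The squared Euclidean norm `‖h‖₂² = Σ_j h_j²` of `h ∈ ℤ^d`. -/
def normSq {d : ℕ} (h : Fin d → ℤ) : ℝ := ∑ j, (h j : ℝ) ^ 2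

/-- The Euclidean norm of a complex vector. -/
def vecNorm {ι : Type*} [Fintype ι] (y : ι → ℂ) : ℝ := Real.sqrt (∑ ξ, ‖y ξ‖ ^ 2)

/-- The diagonal matrix `D` with entries `2π²γ‖h_ξ‖₂²`, indexed by the
multi-indices `ξ ∈ ℤ_{n_1} × ⋯ × ℤ_{n_r}`. -/
def DmatR {d r : ℕ} (γ : ℝ) (n : Fin r → ℕ)
    (hfam : ((j : Fin r) → Fin (n j)) → Fin d → ℤ) :
    Matrix ((j : Fin r) → Fin (n j)) ((j : Fin r) → Fin (n j)) ℂ :=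
  Matrix.diagonal fun ξ => ((2 * Real.pi ^ 2 * γ * normSq (hfam ξ) : ℝ) : ℂ)

/-- The multiplication matrix `W` with entries
`W_{ξ,ξ'} = (1/γ) Σ_{h·z_j ≡ ξ_j−ξ'_j (mod n_j) ∀j} v̂(h)`. -/
def WmatR {d r : ℕ} (γ : ℝ) (vhat : (Fin d → ℤ) → ℂ) (n : Fin r → ℕ)
    (z : Fin r → Fin d → ℤ) :
    Matrix ((j : Fin r) → Fin (n j)) ((j : Fin r) → Fin (n j)) ℂ :=
  Matrix.of fun ξ ξ' => (1 / (γ : ℂ)) *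
    ∑' h : {h : Fin d → ℤ // ∀ j,
        ((dotZ h (z j) : ZMod (n j))) = ((ξ j : ℕ) : ZMod (n j)) - ((ξ' j : ℕ) : ZMod (n j))},
      vhat h.1

/-- **Rank-r lattice first commutator bound.** For `α > 5/2` and `‖v̂‖_α < ∞`,
there is `c₁ > 0`, independent of the moduli, the generating vectors, the
minimal anti-aliasing family and `y`, such that
`‖(DW − WD) y‖₂ ≤ c₁ ‖(D + I) y‖₂`. -/
lemma summable_max_rpow {q : ℝ} (hq : 1 < q) :
    Summable fun k : ℤ => (max |(k : ℝ)| 1) ^ (-q) := by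
  have hnat : Summable fun n : ℕ => (max |((n : ℤ) : ℝ)| 1) ^ (-q) := by
    rw [← summable_nat_add_iff 1]
    have : Summable fun n : ℕ => ((n : ℝ) + 1) ^ (-q) := by
      have := (summable_nat_add_iff 1).mpr (Real.summable_nat_rpow.mpr (by linarith : -q < -1))
      refine this.congr fun n => by push_cast; ring_nf
    refine this.congr fun n => ?_
    have h1 : (1 : ℝ) ≤ ((n : ℝ) + 1) := by have := Nat.cast_nonneg (α := ℝ) n; linarith
    have habs : |(((n + 1 : ℕ) : ℤ) : ℝ)| = (n : ℝ) + 1 := by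
      push_cast; rw [abs_of_nonneg (by positivity)]
    rw [habs, max_eq_left h1]
  refine Summable.of_nat_of_neg hnat (hnat.congr fun n => ?_)
  simp

lemma summable_pi_prod {d : ℕ} {f : ℤ → ℝ} (h0 : ∀ k, 0 ≤ f k) (hf : Summable f) :
    Summable fun h : Fin d → ℤ => ∏ j, f (h j) := by
  induction d with
  | zero => exact Summable.of_finite
  | succ d ih =>
    have hmul := hf.mul_of_nonneg ih h0 (fun h => Finset.prod_nonneg fun j _ => h0 _)
    rw [← (Fin.consEquiv (fun _ : Fin (d+1) => ℤ)).summable_iff]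
    refine hmul.congr fun p => ?_
    simp only [Function.comp, Fin.consEquiv_apply]
    rw [Fin.prod_univ_succ]
    simp

def mfun (k : ℤ) : ℝ := max |(k : ℝ)| 1

lemma one_le_mfun (k : ℤ) : 1 ≤ mfun k := le_max_right _ _
lemma mfun_pos (k : ℤ) : 0 < mfun k := lt_of_lt_of_le one_pos (one_le_mfun k)

def mprod {d : ℕ} (h : Fin d → ℤ) : ℝ := ∏ j, mfun (h j)

lemma one_le_mprod {d : ℕ} (h : Fin d → ℤ) : 1 ≤ mprod h := by
  unfold mprod
  calc (1:ℝ) = ∏ _j : Fin d, 1 := by simp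
  _ ≤ ∏ j, mfun (h j) :=
      Finset.prod_le_prod (fun j _ => zero_le_one) (fun j _ => one_le_mfun _)
lemma mprod_pos {d : ℕ} (h : Fin d → ℤ) : 0 < mprod h :=
  lt_of_lt_of_le one_pos (one_le_mprod h)

lemma kor_eq {d : ℕ} {α : ℝ} (hα : 0 < α) (h : Fin d → ℤ) :
    korWeightSq α h = (mprod h) ^ (2 * α) := by
  unfold korWeightSq mprod
  rw [← Real.finset_prod_rpow _ _ (fun j _ => (mfun_pos (h j)).le)]
  refine Finset.prod_congr rfl fun j _ => ?_
  rcases eq_or_ne (h j) 0 with h0 | h0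
  · simp [h0, mfun, Real.zero_rpow (by positivity : (2:ℝ) * α ≠ 0)]
  · have h1 : (1:ℝ) ≤ |(h j : ℝ)| := by
      rw [← Int.cast_abs]
      exact_mod_cast Int.one_le_abs (by simpa using h0)
    have : (1:ℝ) ≤ |(h j : ℝ)| ^ (2 * α) := Real.one_le_rpow h1 (by positivity)
    rw [max_eq_left this, mfun, max_eq_left h1]

lemma summable_mprod_rpow {d : ℕ} {q : ℝ} (hq : 1 < q) :
    Summable fun h : Fin d → ℤ => (mprod h) ^ (-q) := by
  have := summable_pi_prod (d := d) (f := fun k => mfun k ^ (-q))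
    (fun k => Real.rpow_nonneg (mfun_pos k).le _) ((summable_max_rpow hq).congr fun k => rfl)
  refine this.congr fun h => ?_
  unfold mprod
  rw [← Real.finset_prod_rpow _ _ (fun j _ => (mfun_pos (h j)).le)]

lemma normSq_nonneg {d : ℕ} (h : Fin d → ℤ) : 0 ≤ normSq h :=
  Finset.sum_nonneg fun j _ => sq_nonneg _

lemma normSq_le_mprod_sq {d : ℕ} (h : Fin d → ℤ) : normSq h ≤ d * mprod h ^ 2 := by
  unfold normSq
  calc ∑ j, (h j : ℝ) ^ 2 ≤ ∑ _j : Fin d, mprod h ^ 2 := by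
        refine Finset.sum_le_sum fun j _ => ?_
        have h1 : (h j : ℝ) ^ 2 ≤ mfun (h j) ^ 2 := by
          have : |(h j : ℝ)| ≤ mfun (h j) := le_max_left _ _
          calc (h j : ℝ) ^ 2 = |(h j : ℝ)| ^ 2 := (sq_abs _).symm
          _ ≤ mfun (h j) ^ 2 := by nlinarith [abs_nonneg ((h j : ℝ))]
        have h2 : mfun (h j) ^ 2 ≤ mprod h ^ 2 := by
          have : mfun (h j) ≤ mprod h := by
            unfold mprod
            rw [← Finset.mul_prod_erase Finset.univ _ (Finset.mem_univ j)]
            have h1 : (1:ℝ) ≤ ∏ i ∈ Finset.univ.erase j, mfun (h i) := by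
              calc (1:ℝ) = ∏ _i ∈ Finset.univ.erase j, 1 := by simp
              _ ≤ _ := Finset.prod_le_prod (fun i _ => zero_le_one) (fun i _ => one_le_mfun _)
            nlinarith [mfun_pos (h j)]
          nlinarith [mfun_pos (h j)]
        linarith
  _ = d * mprod h ^ 2 := by simp [mul_comm]

/-- `P h := 3‖h‖² + 2‖h‖` bound. -/
lemma P_le {d : ℕ} (h : Fin d → ℤ) :
    3 * normSq h + 2 * Real.sqrt (normSq h) ≤ (5 * d + 2) * mprod h ^ 2 := by
  have hS := normSq_nonneg h
  have hM := one_le_mprod h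
  have h1 := normSq_le_mprod_sq h
  have h2 : Real.sqrt (normSq h) ≤ normSq h + 1 := by
    nlinarith [Real.sq_sqrt hS, Real.sqrt_nonneg (normSq h)]
  have hd : (0:ℝ) ≤ (d:ℝ) := Nat.cast_nonneg d
  nlinarith


lemma kor_pos {d : ℕ} {α : ℝ} (h : Fin d → ℤ) : 0 < korWeightSq α h := by
  unfold korWeightSq
  exact Finset.prod_pos fun j _ => lt_of_lt_of_le one_pos (le_max_right _ _)

lemma summable_mul_vhat {d : ℕ} {α : ℝ} {vhat : (Fin d → ℤ) → ℂ}
    (hv : Summable fun h : Fin d → ℤ => ‖vhat h‖ ^ 2 * korWeightSq α h)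
    {P : (Fin d → ℤ) → ℝ} (hP0 : ∀ h, 0 ≤ P h)
    (hPsum : Summable fun h => P h ^ 2 / korWeightSq α h) :
    Summable fun h => P h * ‖vhat h‖ := by
  refine Summable.of_nonneg_of_le (fun h => mul_nonneg (hP0 h) (norm_nonneg _))
    (fun h => ?_) ((hPsum.add hv).div_const 2)
  set k := korWeightSq α h with hk
  have hkpos : 0 < k := kor_pos h
  have hsk : (0:ℝ) < Real.sqrt k := Real.sqrt_pos.mpr hkpos
  have hab : P h * ‖vhat h‖ = (P h / Real.sqrt k) * (‖vhat h‖ * Real.sqrt k) := by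
    field_simp
  rw [hab]
  have key : (P h / Real.sqrt k) * (‖vhat h‖ * Real.sqrt k)
      ≤ ((P h / Real.sqrt k) ^ 2 + (‖vhat h‖ * Real.sqrt k) ^ 2) / 2 := by
    nlinarith [sq_nonneg (P h / Real.sqrt k - ‖vhat h‖ * Real.sqrt k)]
  have e1 : (P h / Real.sqrt k) ^ 2 = P h ^ 2 / k := by
    rw [div_pow, Real.sq_sqrt hkpos.le]
  have e2 : (‖vhat h‖ * Real.sqrt k) ^ 2 = ‖vhat h‖ ^ 2 * k := by
    rw [mul_pow, Real.sq_sqrt hkpos.le]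
  rw [e1, e2] at key
  exact key

lemma summable_vnorm {d : ℕ} {α : ℝ} (hα : 5/2 < α) {vhat : (Fin d → ℤ) → ℂ}
    (hv : Summable fun h : Fin d → ℤ => ‖vhat h‖ ^ 2 * korWeightSq α h) :
    Summable fun h => ‖vhat h‖ := by
  have h0 : 0 < α := by linarith
  have := summable_mul_vhat hv (P := fun _ => 1) (fun h => zero_le_one) ?_
  · exact this.congr fun h => by ring
  · refine ((summable_mprod_rpow (d := d) (q := 2*α) (by linarith)).congr fun h => ?_)
    rw [kor_eq h0, one_pow, one_div, ← Real.rpow_neg (mprod_pos h).le]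

lemma summable_gfun {d : ℕ} {α : ℝ} (hα : 5/2 < α) {vhat : (Fin d → ℤ) → ℂ}
    (hv : Summable fun h : Fin d → ℤ => ‖vhat h‖ ^ 2 * korWeightSq α h) :
    Summable fun h => (3 * normSq h + 2 * Real.sqrt (normSq h)) * ‖vhat h‖ := by
  have h0 : 0 < α := by linarith
  refine summable_mul_vhat hv (fun h => ?_) ?_
  · have := normSq_nonneg h; have := Real.sqrt_nonneg (normSq h); linarith
  · have hsum : Summable fun h : Fin d → ℤ =>
        ((5 * d + 2 : ℝ) ^ 2) * (mprod h) ^ (-(2*α - 4)) :=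
      (summable_mprod_rpow (by linarith)).mul_left _
    refine Summable.of_nonneg_of_le
      (fun h => div_nonneg (sq_nonneg _) (kor_pos h).le) (fun h => ?_) hsum
    have hM := one_le_mprod h
    have hMpos := mprod_pos h
    have hP := P_le h
    have hP0 : 0 ≤ 3 * normSq h + 2 * Real.sqrt (normSq h) := by
      have := normSq_nonneg h; have := Real.sqrt_nonneg (normSq h); linarith
    have hkor : korWeightSq α h = (mprod h) ^ (2*α) := kor_eq h0 h
    rw [hkor, div_le_iff₀ (by positivity)]
    have e : ((5 * d + 2 : ℝ) ^ 2) * (mprod h) ^ (-(2*α - 4)) * (mprod h) ^ (2*α)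
        = ((5 * d + 2 : ℝ) ^ 2) * (mprod h ^ 2) ^ 2 := by
      rw [mul_assoc, ← Real.rpow_add hMpos,
        show -(2*α-4) + 2*α = ((4:ℕ):ℝ) by push_cast; ring, Real.rpow_natCast]
      ring
    rw [e]
    have hd : (0:ℝ) ≤ (d:ℝ) := Nat.cast_nonneg d
    nlinarith [sq_nonneg (mprod h ^ 2)]
  

lemma normSq_add' {d : ℕ} (a h : Fin d → ℤ) :
    normSq (a + h) = normSq a + 2 * (∑ j, (a j : ℝ) * (h j : ℝ)) + normSq h := by
  unfold normSq
  rw [Finset.mul_sum, ← Finset.sum_add_distrib, ← Finset.sum_add_distrib]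
  refine Finset.sum_congr rfl fun j _ => ?_
  have : ((a + h) j : ℝ) = (a j : ℝ) + (h j : ℝ) := by push_cast [Pi.add_apply]; ring
  rw [this]; ring

lemma dot_abs_le {d : ℕ} (a h : Fin d → ℤ) :
    |∑ j, (a j : ℝ) * (h j : ℝ)| ≤ Real.sqrt (normSq a) * Real.sqrt (normSq h) := by
  have := Finset.sum_mul_sq_le_sq_mul_sq Finset.univ (fun j => (a j : ℝ)) (fun j => (h j : ℝ))
  have h1 : |∑ j, (a j : ℝ) * (h j : ℝ)|
      = Real.sqrt ((∑ j, (a j : ℝ) * (h j : ℝ)) ^ 2) := (Real.sqrt_sq_eq_abs _).symm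
  rw [h1, ← Real.sqrt_mul (normSq_nonneg a)]
  exact Real.sqrt_le_sqrt (by simpa [normSq] using this)

lemma key_diff {d : ℕ} {a b h : Fin d → ℤ}
    (h1 : normSq a ≤ normSq (b + h)) (h2 : normSq b ≤ normSq (a + (-h))) :
    |normSq a - normSq b| ≤ 3 * normSq h + 2 * Real.sqrt (normSq h) * Real.sqrt (normSq b) := by
  set Sa := normSq a; set Sb := normSq b; set Sh := normSq h
  set sa := Real.sqrt Sa; set sb := Real.sqrt Sb; set t := Real.sqrt Sh
  have hSa := normSq_nonneg a
  have hSb := normSq_nonneg b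
  have hSh := normSq_nonneg h
  have hsa2 : sa ^ 2 = Sa := Real.sq_sqrt hSa
  have hsb2 : sb ^ 2 = Sb := Real.sq_sqrt hSb
  have ht2 : t ^ 2 = Sh := Real.sq_sqrt hSh
  have hsa0 : 0 ≤ sa := Real.sqrt_nonneg _
  have hsb0 : 0 ≤ sb := Real.sqrt_nonneg _
  have ht0 : 0 ≤ t := Real.sqrt_nonneg _
  have e1 : normSq (b + h) = Sb + 2 * (∑ j, (b j : ℝ) * (h j : ℝ)) + Sh := normSq_add' b h
  have e2 : normSq (a + (-h)) = Sa + 2 * (∑ j, (a j : ℝ) * ((-h) j : ℝ)) + normSq (-h) :=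
    normSq_add' a (-h)
  have hnegh : normSq (-h : Fin d → ℤ) = Sh := by
    unfold normSq Sh; unfold normSq
    refine Finset.sum_congr rfl fun j _ => ?_
    have : ((-h : Fin d → ℤ) j : ℝ) = -(h j : ℝ) := by push_cast [Pi.neg_apply]; ring
    rw [this]; ring
  have hd1 : |∑ j, (b j : ℝ) * (h j : ℝ)| ≤ sb * t := dot_abs_le b h
  have hd2' : |∑ j, (a j : ℝ) * ((-h) j : ℝ)| ≤ sa * t := by
    have := dot_abs_le a (-h)
    rwa [hnegh] at this
  have hup : Sa - Sb ≤ 2 * (sb * t) + Sh := by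
    rw [e1] at h1
    have := abs_le.mp hd1
    linarith [this.2]
  have hdown : Sb - Sa ≤ 2 * (sa * t) + Sh := by
    rw [e2, hnegh] at h2
    have := abs_le.mp hd2'
    linarith [this.2]
  have hsale : sa ≤ sb + t := by
    have hsq : Sa ≤ (sb + t) ^ 2 := by nlinarith
    calc sa = Real.sqrt Sa := rfl
    _ ≤ Real.sqrt ((sb + t) ^ 2) := Real.sqrt_le_sqrt hsq
    _ = sb + t := by rw [Real.sqrt_sq (by linarith)]
  rw [abs_le]
  constructor
  · nlinarith
  · nlinarith


theorem rankr_first_commutator_bound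
    (d r : ℕ) (hr : 1 ≤ r) (γ : ℝ) (hγ : 0 < γ) (α : ℝ) (hα : 5 / 2 < α)
    (vhat : (Fin d → ℤ) → ℂ)
    (hv : Summable fun h : Fin d → ℤ => ‖vhat h‖ ^ 2 * korWeightSq α h) :
    ∃ c₁ : ℝ, 0 < c₁ ∧
      ∀ (n : Fin r → ℕ), (∀ j, 1 ≤ n j) → ∀ (z : Fin r → Fin d → ℤ)
        (hfam : ((j : Fin r) → Fin (n j)) → Fin d → ℤ),
        (∀ ξ j, ((dotZ (hfam ξ) (z j) : ZMod (n j))) = ((ξ j : ℕ) : ZMod (n j))) →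
        (∀ ξ (h : Fin d → ℤ),
            (∀ j, ((dotZ h (z j) : ZMod (n j))) = ((ξ j : ℕ) : ZMod (n j))) →
            normSq (hfam ξ) ≤ normSq h) →
        ∀ y : ((j : Fin r) → Fin (n j)) → ℂ,
          vecNorm ((DmatR γ n hfam * WmatR γ vhat n z
              - WmatR γ vhat n z * DmatR γ n hfam).mulVec y)
            ≤ c₁ * vecNorm ((DmatR γ n hfam + 1).mulVec y) := by
  classical
  have hπ : (0:ℝ) < 2 * Real.pi ^ 2 := by positivity
  set gfun : (Fin d → ℤ) → ℝ :=
    fun h => (3 * normSq h + 2 * Real.sqrt (normSq h)) * ‖vhat h‖ with hgfun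
  have hg : Summable gfun := summable_gfun hα hv
  have hvn : Summable fun h : Fin d → ℤ => ‖vhat h‖ := summable_vnorm hα hv
  have hgfun0 : ∀ h, 0 ≤ gfun h := fun h => by
    have := normSq_nonneg h; have := Real.sqrt_nonneg (normSq h)
    have := norm_nonneg (vhat h); positivity
  set S : ℝ := ∑' h, gfun h with hSdef
  have hS0 : 0 ≤ S := tsum_nonneg hgfun0
  set c₂ : ℝ := max 1 (1 / (2 * Real.pi ^ 2 * γ)) with hc₂def
  have hc₂1 : 1 ≤ c₂ := le_max_left _ _
  have hc₂0 : 0 < c₂ := lt_of_lt_of_le one_pos hc₂1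
  have hc₂key : ∀ x : ℝ, 0 ≤ x → 1 + x ≤ c₂ * (1 + 2 * Real.pi ^ 2 * γ * x) := by
    intro x hx
    have h1 : 1 / (2 * Real.pi ^ 2 * γ) ≤ c₂ := le_max_right _ _
    have h2 : x = (1 / (2 * Real.pi ^ 2 * γ)) * (2 * Real.pi ^ 2 * γ * x) := by
      field_simp
    have h3 : x ≤ c₂ * (2 * Real.pi ^ 2 * γ * x) := by
      conv_lhs => rw [h2]
      exact mul_le_mul_of_nonneg_right h1 (by positivity)
    nlinarith
  refine ⟨2 * Real.pi ^ 2 * c₂ * S + 1, by positivity, ?_⟩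
  intro n hn z hfam hcong hmin y
  haveI : ∀ j, NeZero (n j) := fun j => ⟨by have := hn j; omega⟩
  set A := (j : Fin r) → ZMod (n j) with hA
  set φ : ((j : Fin r) → Fin (n j)) → A := fun ξ j => ((ξ j : ℕ) : ZMod (n j)) with hφ
  have hφbij : Function.Bijective φ := by
    rw [Fintype.bijective_iff_injective_and_card]
    constructor
    · intro ξ ξ' hEq
      funext j
      have hj : ((ξ j : ℕ) : ZMod (n j)) = ((ξ' j : ℕ) : ZMod (n j)) := congrFun hEq j
      have := congrArg ZMod.val hj
      rw [ZMod.val_cast_of_lt (ξ j).isLt, ZMod.val_cast_of_lt (ξ' j).isLt] at this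
      exact Fin.ext this
    · rw [Fintype.card_pi, Fintype.card_pi]
      exact Finset.prod_congr rfl fun j _ => by simp [ZMod.card]
  set e : ((j : Fin r) → Fin (n j)) ≃ A := Equiv.ofBijective φ hφbij with he
  set Φ : (Fin d → ℤ) → A := fun h j => ((dotZ h (z j) : ZMod (n j))) with hΦ
  set G : A → ℝ := fun δ => ∑' h : (Φ ⁻¹' {δ}), gfun h.1 with hG
  have hG0 : ∀ δ, 0 ≤ G δ := fun δ => tsum_nonneg fun h => hgfun0 _
  have hGtot : ∑ δ : A, G δ = S := by
    exact (hasSum_fintype G).unique (hg.hasSum.tsum_fiberwise Φ)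
  set dval : ((j : Fin r) → Fin (n j)) → ℝ :=
    fun ξ => 2 * Real.pi ^ 2 * γ * normSq (hfam ξ) with hdval
  have hdval0 : ∀ ξ, 0 ≤ dval ξ := fun ξ => by
    have := normSq_nonneg (hfam ξ); positivity
  set K := (DmatR γ n hfam * WmatR γ vhat n z - WmatR γ vhat n z * DmatR γ n hfam) with hK
  set U : A → ℝ := fun a =>
    (2 * Real.pi ^ 2 * c₂ * (1 + dval (e.symm a))) * ‖y (e.symm a)‖ with hU
  have hU0 : ∀ a, 0 ≤ U a := fun a => by
    have := hdval0 (e.symm a); have := norm_nonneg (y (e.symm a)); positivity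
  -- Step 1: entry bound
  have dotZ_add : ∀ (a b c : Fin d → ℤ), dotZ (a + b) c = dotZ a c + dotZ b c := by
    intro a b c
    unfold dotZ
    rw [← Finset.sum_add_distrib]
    exact Finset.sum_congr rfl fun i _ => by rw [Pi.add_apply]; ring
  have dotZ_neg : ∀ (b c : Fin d → ℤ), dotZ (-b) c = -dotZ b c := by
    intro b c
    unfold dotZ
    rw [← Finset.sum_neg_distrib]
    exact Finset.sum_congr rfl fun i _ => by rw [Pi.neg_apply]; ring
  have hKent : ∀ ξ ξ', ‖K ξ ξ'‖ ≤ G (e ξ - e ξ') *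
      (2 * Real.pi ^ 2 * c₂ * (1 + dval ξ')) := by
    intro ξ ξ'
    set p : (Fin d → ℤ) → Prop := fun h => ∀ j,
      ((dotZ h (z j) : ZMod (n j))) = ((ξ j : ℕ) : ZMod (n j)) - ((ξ' j : ℕ) : ZMod (n j))
      with hp
    have hW : WmatR γ vhat n z ξ ξ' = (1/(γ:ℂ)) * ∑' h : {h // p h}, vhat h.1 := rfl
    have hKval : K ξ ξ' = ((dval ξ - dval ξ' : ℝ) : ℂ) * (WmatR γ vhat n z ξ ξ') := by
      rw [hK, Matrix.sub_apply, DmatR, Matrix.diagonal_mul, Matrix.mul_diagonal, hdval]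
      push_cast
      ring
    have hsubn : Summable fun h : {h // p h} => ‖vhat h.1‖ := hvn.subtype {h | p h}
    have hsubg : Summable fun h : {h // p h} => gfun h.1 := hg.subtype {h | p h}
    have hSb0 : 0 ≤ normSq (hfam ξ') := normSq_nonneg _
    have hptw : ∀ h : {h // p h}, |dval ξ - dval ξ'| * ‖vhat h.1‖
        ≤ (2 * Real.pi ^ 2 * γ * (1 + normSq (hfam ξ'))) * gfun h.1 := by
      intro h
      have hmem := h.2
      have h1 : normSq (hfam ξ) ≤ normSq (hfam ξ' + h.1) := by
        refine hmin ξ _ fun j => ?_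
        rw [dotZ_add]
        push_cast
        rw [hcong ξ' j, hmem j]
        ring
      have h2 : normSq (hfam ξ') ≤ normSq (hfam ξ + (-h.1)) := by
        refine hmin ξ' _ fun j => ?_
        rw [dotZ_add, dotZ_neg]
        push_cast
        rw [hcong ξ j, hmem j]
        ring
      have hkd := key_diff h1 h2
      have hSh0 : 0 ≤ normSq h.1 := normSq_nonneg _
      have ht0 : 0 ≤ Real.sqrt (normSq h.1) := Real.sqrt_nonneg _
      have hsb1 : Real.sqrt (normSq (hfam ξ')) ≤ 1 + normSq (hfam ξ') := by
        nlinarith [Real.sq_sqrt hSb0, Real.sqrt_nonneg (normSq (hfam ξ'))]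
      have hΔ : |dval ξ - dval ξ'| ≤ 2 * Real.pi ^ 2 * γ *
          (3 * normSq h.1 + 2 * Real.sqrt (normSq h.1) * Real.sqrt (normSq (hfam ξ'))) := by
        have he1 : dval ξ - dval ξ'
            = 2 * Real.pi ^ 2 * γ * (normSq (hfam ξ) - normSq (hfam ξ')) := by
          rw [hdval]; ring
        rw [he1, abs_mul, abs_of_pos (by positivity)]
        exact mul_le_mul_of_nonneg_left hkd (by positivity)
      have hmid : 3 * normSq h.1 + 2 * Real.sqrt (normSq h.1) * Real.sqrt (normSq (hfam ξ'))
          ≤ (1 + normSq (hfam ξ')) * (3 * normSq h.1 + 2 * Real.sqrt (normSq h.1)) := by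
        nlinarith
      calc |dval ξ - dval ξ'| * ‖vhat h.1‖
          ≤ (2 * Real.pi ^ 2 * γ * ((1 + normSq (hfam ξ'))
              * (3 * normSq h.1 + 2 * Real.sqrt (normSq h.1)))) * ‖vhat h.1‖ := by
            refine mul_le_mul_of_nonneg_right (le_trans hΔ ?_) (norm_nonneg _)
            exact mul_le_mul_of_nonneg_left hmid (by positivity)
      _ = (2 * Real.pi ^ 2 * γ * (1 + normSq (hfam ξ'))) * gfun h.1 := by
            rw [hgfun]
            ring
    have hGeq : ∑' h : {h // p h}, gfun h.1 = G (e ξ - e ξ') := by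
      rw [show G (e ξ - e ξ') = ∑' (h : ↑(Φ ⁻¹' {e ξ - e ξ'})), gfun h.1 from rfl]
      have hiff : ∀ h, p h ↔ h ∈ Φ ⁻¹' {e ξ - e ξ'} := by
        intro h
        simp only [Set.mem_preimage, Set.mem_singleton_iff]
        constructor
        · intro hp'
          funext j
          exact hp' j
        · intro hq j
          exact congrFun hq j
      rw [← Equiv.tsum_eq (Equiv.subtypeEquivRight hiff)
        (fun h : ↥(Φ ⁻¹' {e ξ - e ξ'}) => gfun h.1)]
      exact tsum_congr fun c => by simp [Equiv.subtypeEquivRight]; rfl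
    have hγc : ‖(1/(γ:ℂ))‖ = 1/γ := by
      rw [norm_div, norm_one, Complex.norm_real, Real.norm_eq_abs, abs_of_pos hγ]
    rw [hKval, norm_mul, hW, norm_mul, hγc, Complex.norm_real, Real.norm_eq_abs]
    have hGnn := hG0 (e ξ - e ξ')
    calc |dval ξ - dval ξ'| * (1/γ * ‖∑' h : {h // p h}, vhat h.1‖)
        ≤ |dval ξ - dval ξ'| * (1/γ * ∑' h : {h // p h}, ‖vhat h.1‖) := by
          refine mul_le_mul_of_nonneg_left ?_ (abs_nonneg _)
          exact mul_le_mul_of_nonneg_left (norm_tsum_le_tsum_norm hsubn) (by positivity)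
    _ = 1/γ * ∑' h : {h // p h}, |dval ξ - dval ξ'| * ‖vhat h.1‖ := by
          rw [tsum_mul_left]; ring
    _ ≤ 1/γ * ∑' h : {h // p h}, (2 * Real.pi ^ 2 * γ * (1 + normSq (hfam ξ'))) * gfun h.1 := by
          refine mul_le_mul_of_nonneg_left
            (Summable.tsum_le_tsum hptw (hsubn.mul_left _) (hsubg.mul_left _)) (by positivity)
    _ = (2 * Real.pi ^ 2 * (1 + normSq (hfam ξ'))) * ∑' h : {h // p h}, gfun h.1 := by
          rw [tsum_mul_left]
          field_simp
    _ = (2 * Real.pi ^ 2 * (1 + normSq (hfam ξ'))) * G (e ξ - e ξ') := by rw [hGeq]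
    _ ≤ G (e ξ - e ξ') * (2 * Real.pi ^ 2 * c₂ * (1 + dval ξ')) := by
          have hkey := hc₂key (normSq (hfam ξ')) hSb0
          have hd' : dval ξ' = 2 * Real.pi ^ 2 * γ * normSq (hfam ξ') := by rw [hdval]
          rw [hd']
          nlinarith [hGnn, hπ, mul_le_mul_of_nonneg_left hkey hGnn]
  -- Step 2: row bound
  have hrow : ∀ ξ, ‖(K.mulVec y) ξ‖ ≤ ∑ δ : A, G δ * U (e ξ - δ) := by
    intro ξ
    have h1 : (K.mulVec y) ξ = ∑ ξ', K ξ ξ' * y ξ' := rfl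
    rw [h1]
    refine le_trans (norm_sum_le _ _) ?_
    have h2 : ∀ ξ', ‖K ξ ξ' * y ξ'‖ ≤ G (e ξ - e ξ') * U (e ξ') := by
      intro ξ'
      rw [norm_mul]
      have := hKent ξ ξ'
      have hy0 := norm_nonneg (y ξ')
      have hgg := hG0 (e ξ - e ξ')
      calc ‖K ξ ξ'‖ * ‖y ξ'‖ ≤ (G (e ξ - e ξ') *
          (2 * Real.pi ^ 2 * c₂ * (1 + dval ξ'))) * ‖y ξ'‖ := by
            exact mul_le_mul_of_nonneg_right this hy0
      _ = G (e ξ - e ξ') * U (e ξ') := by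
            rw [hU]; simp only [Equiv.symm_apply_apply]; ring
    refine le_trans (Finset.sum_le_sum fun ξ' _ => h2 ξ') ?_
    have h3 : ∑ ξ', G (e ξ - e ξ') * U (e ξ') = ∑ b : A, G (e ξ - b) * U b :=
      Equiv.sum_comp e (fun b => G (e ξ - b) * U b)
    rw [h3]
    have h4 : ∑ δ : A, G δ * U (e ξ - δ)
        = ∑ b : A, G (e ξ - b) * U b := by
      rw [← Equiv.sum_comp (Equiv.subLeft (e ξ)) (fun b => G (e ξ - b) * U b)]
      refine Finset.sum_congr rfl fun δ _ => ?_
      simp [sub_sub_cancel]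
    rw [h4]
  -- Step 3: Young
  have hyoung : Real.sqrt (∑ a : A, (∑ δ : A, G δ * U (a - δ)) ^ 2)
      ≤ S * Real.sqrt (∑ a : A, U a ^ 2) := by
    set F : A → EuclideanSpace ℝ A :=
      fun δ => G δ • ((WithLp.equiv 2 (A → ℝ)).symm (fun a => U (a - δ))) with hF
    have happ : ∀ a : A, (∑ δ : A, F δ) a = ∑ δ : A, G δ * U (a - δ) := by
      intro a
      rw [WithLp.ofLp_sum, Finset.sum_apply]
      rfl
    have hL : Real.sqrt (∑ a : A, (∑ δ : A, G δ * U (a - δ)) ^ 2) = ‖∑ δ : A, F δ‖ := by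
      rw [EuclideanSpace.norm_eq]
      congr 1
      refine Finset.sum_congr rfl fun a _ => ?_
      rw [happ a, Real.norm_eq_abs, sq_abs]
    rw [hL]
    refine le_trans (norm_sum_le _ _) ?_
    have hnormF : ∀ δ, ‖F δ‖ = G δ * Real.sqrt (∑ a : A, U a ^ 2) := by
      intro δ
      rw [hF]
      simp only []
      rw [norm_smul, Real.norm_eq_abs, abs_of_nonneg (hG0 δ), EuclideanSpace.norm_eq]
      congr 2
      rw [← Equiv.sum_comp (Equiv.subRight δ) (fun a => U a ^ 2)]
      refine Finset.sum_congr rfl fun a _ => ?_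
      rw [Real.norm_eq_abs, sq_abs]
      rfl
    refine le_of_eq ?_
    rw [show ∑ δ : A, ‖F δ‖ = ∑ δ : A, G δ * Real.sqrt (∑ a : A, U a ^ 2) from
      Finset.sum_congr rfl fun δ _ => hnormF δ, ← Finset.sum_mul, hGtot]
  -- Step 4: RHS identification
  have hrhs : Real.sqrt (∑ a : A, U a ^ 2)
      = 2 * Real.pi ^ 2 * c₂ * vecNorm ((DmatR γ n hfam + 1).mulVec y) := by
    have happly : ∀ ξ, ((DmatR γ n hfam + 1).mulVec y) ξ = ((dval ξ + 1 : ℝ) : ℂ) * y ξ := by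
      intro ξ
      have hdiag : DmatR γ n hfam + 1
          = Matrix.diagonal (fun ξ => ((dval ξ + 1 : ℝ) : ℂ)) := by
        rw [DmatR, ← Matrix.diagonal_one, Matrix.diagonal_add]
        congr 1
        funext ξ
        rw [hdval]
        push_cast
        ring
      rw [hdiag, Matrix.mulVec_diagonal]
    have h1 : ∑ a : A, U a ^ 2 = ∑ ξ, U (e ξ) ^ 2 :=
      (Equiv.sum_comp e (fun a => U a ^ 2)).symm
    have h2 : ∀ ξ, U (e ξ) = 2 * Real.pi ^ 2 * c₂ * ((1 + dval ξ) * ‖y ξ‖) := by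
      intro ξ
      rw [hU]
      simp only [Equiv.symm_apply_apply]
      ring
    have h3 : ∀ ξ, ‖((DmatR γ n hfam + 1).mulVec y) ξ‖ = (1 + dval ξ) * ‖y ξ‖ := by
      intro ξ
      rw [happly ξ, norm_mul, Complex.norm_real, Real.norm_eq_abs,
        abs_of_nonneg (by linarith [hdval0 ξ])]
      ring
    rw [h1, vecNorm]
    have h4 : ∑ ξ, U (e ξ) ^ 2
        = (2 * Real.pi ^ 2 * c₂) ^ 2 * ∑ ξ, ‖((DmatR γ n hfam + 1).mulVec y) ξ‖ ^ 2 := by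
      rw [Finset.mul_sum]
      refine Finset.sum_congr rfl fun ξ _ => ?_
      rw [h2 ξ, h3 ξ]
      ring
    rw [h4, Real.sqrt_mul (sq_nonneg _), Real.sqrt_sq (by positivity)]
  -- Combine
  have hmono : vecNorm (K.mulVec y)
      ≤ Real.sqrt (∑ a : A, (∑ δ : A, G δ * U (a - δ)) ^ 2) := by
    have h5 : ∑ ξ, ‖(K.mulVec y) ξ‖ ^ 2
        ≤ ∑ ξ, (∑ δ : A, G δ * U (e ξ - δ)) ^ 2 := by
      refine Finset.sum_le_sum fun ξ _ => ?_
      exact pow_le_pow_left₀ (norm_nonneg _) (hrow ξ) 2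
    have h6 : ∑ ξ, (∑ δ : A, G δ * U (e ξ - δ)) ^ 2
        = ∑ a : A, (∑ δ : A, G δ * U (a - δ)) ^ 2 :=
      Equiv.sum_comp e (fun a => (∑ δ : A, G δ * U (a - δ)) ^ 2)
    exact Real.sqrt_le_sqrt (by rw [← h6]; exact h5)
  have hvn0 : 0 ≤ vecNorm ((DmatR γ n hfam + 1).mulVec y) := Real.sqrt_nonneg _
  calc vecNorm (K.mulVec y)
      ≤ Real.sqrt (∑ a : A, (∑ δ : A, G δ * U (a - δ)) ^ 2) := hmono
  _ ≤ S * Real.sqrt (∑ a : A, U a ^ 2) := hyoung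
  _ = S * (2 * Real.pi ^ 2 * c₂) * vecNorm ((DmatR γ n hfam + 1).mulVec y) := by
        rw [hrhs]; ring
  _ ≤ (2 * Real.pi ^ 2 * c₂ * S + 1) * vecNorm ((DmatR γ n hfam + 1).mulVec y) := by
        refine mul_le_mul_of_nonneg_right ?_ hvn0
        nlinarith

end
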